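/- For V_th ∈ (0,1) and τ > 0, the function h(Δ) = V_th·e^{-Δ/(V_th·τ)} + (1 - V_th)·e^{Δ/τ} has h'(Δ) = -(1/τ)·e^{-Δ/(V_th·τ)} + ((1 - V_th)/τ)·e^{Δ/τ}, and the unique root of h' is Δ_τ = -τ·ln(1 - V_th)/(1 + 1/V_th). Moreover h'(Δ) ≤ 0 for all 0 ≤ Δ ≤ Δ_τ, and hence h(Δ) ≤ 1 on [0, Δ_τ]. -/

import Mathlib

/-- For `h Δ = Vth·e^{-Δ/(Vth·τ)} + (1 - Vth)·e^{Δ/τ}`, the derivative is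
`h' Δ = -(1/τ)·e^{-Δ/(Vth·τ)} + ((1-Vth)/τ)·e^{Δ/τ}`, its unique root is
`Δ_τ = -τ·ln(1 - Vth)/(1 + 1/Vth)`, and `h' ≤ 0` hence `h ≤ 1` on `[0, Δ_τ]`. -/
theorem stmt_13 (Vth τ : ℝ) (hV : Vth ∈ Set.Ioo (0:ℝ) 1) (hτ : 0 < τ)
    (h : ℝ → ℝ)
    (hh : ∀ Δ, h Δ = Vth * Real.exp (-Δ / (Vth * τ)) +
      (1 - Vth) * Real.exp (Δ / τ)) :
    (∀ Δ, deriv h Δ = -(1 / τ) * Real.exp (-Δ / (Vth * τ)) +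
      ((1 - Vth) / τ) * Real.exp (Δ / τ)) ∧
    deriv h (-(τ * Real.log (1 - Vth)) / (1 + 1 / Vth)) = 0 ∧
    (∀ Δ, deriv h Δ = 0 → Δ = -(τ * Real.log (1 - Vth)) / (1 + 1 / Vth)) ∧
    (∀ Δ ∈ Set.Icc (0:ℝ) (-(τ * Real.log (1 - Vth)) / (1 + 1 / Vth)),
      deriv h Δ ≤ 0) ∧
    (∀ Δ ∈ Set.Icc (0:ℝ) (-(τ * Real.log (1 - Vth)) / (1 + 1 / Vth)),
      h Δ ≤ 1) := by
  obtain ⟨ha0, ha1⟩ := hV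
  have ha1' : (0:ℝ) < 1 - Vth := by linarith
  have hτ0 : τ ≠ 0 := ne_of_gt hτ
  have ha0' : Vth ≠ 0 := ne_of_gt ha0
  have haτ : Vth * τ ≠ 0 := mul_ne_zero ha0' hτ0
  have hfun : h = fun Δ => Vth * Real.exp (-Δ / (Vth * τ)) +
      (1 - Vth) * Real.exp (Δ / τ) := funext hh
  have hD : ∀ Δ : ℝ, HasDerivAt h
      (-(1 / τ) * Real.exp (-Δ / (Vth * τ)) + ((1 - Vth) / τ) * Real.exp (Δ / τ)) Δ := by
    intro Δ
    have d1 : HasDerivAt (fun Δ : ℝ => -Δ / (Vth * τ)) (-1 / (Vth * τ)) Δ := by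
      simpa using ((hasDerivAt_id Δ).neg.div_const (Vth * τ))
    have d2 : HasDerivAt (fun Δ : ℝ => Δ / τ) (1 / τ) Δ := by
      simpa using ((hasDerivAt_id Δ).div_const τ)
    have e1 := (Real.hasDerivAt_exp (-Δ / (Vth * τ))).comp Δ d1
    have e2 := (Real.hasDerivAt_exp (Δ / τ)).comp Δ d2
    have := ((e1.const_mul Vth).add (e2.const_mul (1 - Vth)))
    rw [hfun]
    refine this.congr_deriv ?_
    field_simp
  have hderiv : ∀ Δ : ℝ, deriv h Δ = -(1 / τ) * Real.exp (-Δ / (Vth * τ)) +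
      ((1 - Vth) / τ) * Real.exp (Δ / τ) := fun Δ => (hD Δ).deriv
  set D := -(τ * Real.log (1 - Vth)) / (1 + 1 / Vth) with hDdef
  have hden : (0:ℝ) < 1 + 1 / Vth := by positivity
  have key : ∀ Δ : ℝ, (1 - Vth) * Real.exp (Δ / τ) =
      Real.exp (Real.log (1 - Vth) + Δ / τ) := by
    intro Δ; rw [Real.exp_add, Real.exp_log ha1']
  have hVτ : (0:ℝ) < Vth * τ := mul_pos ha0 hτ
  have lineq : ∀ Δ : ℝ, (Real.log (1 - Vth) + Δ / τ ≤ -Δ / (Vth * τ) ↔ Δ ≤ D) := by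
    intro Δ
    rw [hDdef, le_div_iff₀ hden]
    have h2' : (Δ / τ) * (Vth * τ) = Δ * Vth := by field_simp
    have h4 : Δ * (1 / Vth) * Vth = Δ := by field_simp
    constructor
    · intro hle
      have h1 := mul_le_mul_of_nonneg_right hle hVτ.le
      rw [div_mul_cancel₀ _ (ne_of_gt hVτ)] at h1
      have h3 : Real.log (1 - Vth) * (Vth * τ) + Δ * Vth ≤ -Δ := by nlinarith [h1, h2']
      rw [← mul_le_mul_iff_of_pos_right ha0]
      nlinarith [h3, h4]
    · intro hle
      have h3 := mul_le_mul_of_nonneg_right hle (le_of_lt ha0)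
      have h5 : Real.log (1 - Vth) * (Vth * τ) + Δ * Vth ≤ -Δ := by nlinarith [h3, h4]
      rw [← mul_le_mul_iff_of_pos_right hVτ, div_mul_cancel₀ _ (ne_of_gt hVτ)]
      nlinarith [h5, h2']
  have lineq2 : ∀ Δ : ℝ, (Real.log (1 - Vth) + Δ / τ = -Δ / (Vth * τ) ↔ Δ = D) := by
    intro Δ
    constructor <;> intro hle
    · rw [hDdef]
      field_simp
      field_simp at hle
      nlinarith
    · subst hle
      field_simp [hDdef] at *
      linarith
  have signIff : ∀ Δ : ℝ, (deriv h Δ ≤ 0 ↔ Δ ≤ D) := by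
    intro Δ
    rw [hderiv Δ]
    have : -(1 / τ) * Real.exp (-Δ / (Vth * τ)) + ((1 - Vth) / τ) * Real.exp (Δ / τ)
        = ((1 - Vth) * Real.exp (Δ / τ) - Real.exp (-Δ / (Vth * τ))) / τ := by
      field_simp; ring
    rw [this, div_le_iff₀ hτ, zero_mul, key, sub_nonpos, Real.exp_le_exp]
    exact lineq Δ
  have zeroIff : ∀ Δ : ℝ, (deriv h Δ = 0 ↔ Δ = D) := by
    intro Δ
    rw [hderiv Δ]
    have : -(1 / τ) * Real.exp (-Δ / (Vth * τ)) + ((1 - Vth) / τ) * Real.exp (Δ / τ)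
        = ((1 - Vth) * Real.exp (Δ / τ) - Real.exp (-Δ / (Vth * τ))) / τ := by
      field_simp; ring
    rw [this, div_eq_zero_iff, key, sub_eq_zero]
    constructor
    · rintro (h1 | h1)
      · exact (lineq2 Δ).mp (Real.exp_injective h1)
      · exact absurd h1 hτ0
    · intro hle
      exact Or.inl (congrArg Real.exp ((lineq2 Δ).mpr hle))
  refine ⟨hderiv, (zeroIff D).mpr rfl, fun Δ hΔ => (zeroIff Δ).mp hΔ,
    fun Δ hΔ => (signIff Δ).mpr hΔ.2, ?_⟩
  intro Δ hΔ
  have hcont : ContinuousOn h (Set.Icc 0 D) := by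
    rw [hfun]; fun_prop
  have hanti : AntitoneOn h (Set.Icc 0 D) := by
    apply antitoneOn_of_deriv_nonpos (convex_Icc 0 D) hcont
    · intro x hx
      exact (hD x).differentiableAt.differentiableWithinAt
    · intro x hx
      rw [interior_Icc] at hx
      exact (signIff x).mpr hx.2.le
  have h0 : h 0 = 1 := by rw [hh]; simp
  calc h Δ ≤ h 0 := hanti (Set.left_mem_Icc.mpr (hΔ.1.trans hΔ.2)) hΔ hΔ.1
    _ = 1 := h0
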